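/- Let X \subseteq {0,1}^d with 0 \in X and y \in X, y \neq 0. Then the segment {0, y} is an edge of conv(X) if and only if y does not belong to the conical hull cone(Z) of Z = { z \in X : z \leq y coordinatewise, z \neq 0, z \neq y }. -/

import Mathlib

/-- The set of vertices of the 0/1-cube in `ℝ^d`. -/
def cubeVerts (d : ℕ) : Set (Fin d → ℝ) := {x | ∀ i, x i = 0 ∨ x i = 1}

/-- The conical hull of a set `Z ⊆ ℝ^d`: all finite nonnegative combinations. -/
def coneHull {d : ℕ} (Z : Set (Fin d → ℝ)) : Set (Fin d → ℝ) :=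
  {x | ∃ (s : Finset (Fin d → ℝ)) (lam : (Fin d → ℝ) → ℝ),
        ↑s ⊆ Z ∧ (∀ z ∈ s, 0 ≤ lam z) ∧ x = ∑ z ∈ s, lam z • z}

/-- Faces absorb convex combinations with strictly positive weights. -/
private lemma extreme_absorb {E : Type*} [AddCommGroup E] [Module ℝ E] {A B : Set E}
    (hAB : IsExtreme ℝ A B) (hA : Convex ℝ A) (t : Finset E) :
    ↑t ⊆ A → ∀ w : E → ℝ, (∀ z ∈ t, 0 < w z) →
      (∑ z ∈ t, w z) = 1 → (∑ z ∈ t, w z • z) ∈ B → ∀ z ∈ t, z ∈ B := by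
  classical
  induction t using Finset.induction_on with
  | empty => simp
  | insert a t ha ih =>
    intro hsub w hw hw1 hxB
    rw [Finset.sum_insert ha] at hw1 hxB
    have hwa : 0 < w a := hw a (Finset.mem_insert_self a t)
    rcases Finset.eq_empty_or_nonempty t with rfl | hne
    · simp only [Finset.sum_empty, add_zero] at hw1 hxB
      rw [hw1, one_smul] at hxB
      intro z hz
      simp only [Finset.mem_insert, Finset.notMem_empty, or_false] at hz
      rwa [hz]
    · set c : ℝ := ∑ z ∈ t, w z with hc
      have hcpos : 0 < c := Finset.sum_pos (fun z hz => hw z (Finset.mem_insert_of_mem hz)) hne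
      have htA : ↑t ⊆ A := fun z hz => hsub (Finset.mem_insert_of_mem hz)
      set q : E := ∑ z ∈ t, (w z / c) • z with hq
      have hwsum : (∑ z ∈ t, w z / c) = 1 := by
        rw [← Finset.sum_div, ← hc, div_self hcpos.ne']
      have hqA : q ∈ A :=
        hA.sum_mem (fun z hz => div_nonneg (hw z (Finset.mem_insert_of_mem hz)).le hcpos.le)
          hwsum (fun z hz => htA hz)
      have hcq : c • q = ∑ z ∈ t, w z • z := by
        rw [hq, Finset.smul_sum]
        refine Finset.sum_congr rfl fun z hz => ?_
        rw [smul_smul, mul_div_cancel₀ _ hcpos.ne']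
      have hxB' : w a • a + c • q ∈ B := by rwa [hcq]
      have hopen : w a • a + c • q ∈ openSegment ℝ a q := ⟨w a, c, hwa, hcpos, hw1, rfl⟩
      obtain ⟨haB, hqB⟩ : a ∈ B ∧ q ∈ B := ⟨hAB.2 (hsub (Finset.mem_insert_self a t)) hqA hxB' hopen,
        hAB.right_mem_of_mem_openSegment (hsub (Finset.mem_insert_self a t)) hqA hxB' hopen⟩
      intro z hz
      rcases Finset.mem_insert.mp hz with rfl | hz
      · exact haB
      · exact ih htA (fun z => w z / c)
          (fun z hz => div_pos (hw z (Finset.mem_insert_of_mem hz)) hcpos) hwsum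
          (by rw [← hq]; exact hqB) z hz

/-- For `X ⊆ {0,1}^d` with `0, y ∈ X`, the segment `{0, y}` is an edge of
`conv X` iff `y ∉ cone(Z)` where `Z = {z ∈ X | z ≤ y, z ≠ 0, z ≠ y}`. -/
theorem stmt4 {d : ℕ} (X : Set (Fin d → ℝ)) (hX : X ⊆ cubeVerts d)
    (h0 : (0 : Fin d → ℝ) ∈ X) (y : Fin d → ℝ) (hy : y ∈ X) (hy0 : y ≠ 0) :
    IsExtreme ℝ (convexHull ℝ X) (segment ℝ 0 y) ↔
      y ∉ coneHull {z ∈ X | (∀ i, z i ≤ y i) ∧ z ≠ 0 ∧ z ≠ y} := by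
  classical
  set Z : Set (Fin d → ℝ) := {z ∈ X | (∀ i, z i ≤ y i) ∧ z ≠ 0 ∧ z ≠ y} with hZ
  have hycube : ∀ i, y i = 0 ∨ y i = 1 := hX hy
  have hnonneg : ∀ x ∈ X, ∀ i, (0:ℝ) ≤ x i := by
    intro x hx i; rcases hX hx i with h | h <;> rw [h] <;> norm_num
  -- existence of a coordinate where y = 1
  obtain ⟨i₁, hi₁⟩ : ∃ i, y i = 1 := by
    by_contra h
    push_neg at h
    apply hy0
    funext i
    rcases hycube i with h0' | h1'
    · exact h0'
    · exact absurd h1' (h i)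
  obtain ⟨N, hNdef⟩ : ∃ N : ℝ, N = ∑ i, y i := ⟨_, rfl⟩
  have hN1 : (1:ℝ) ≤ N := by
    rw [hNdef]
    calc (1:ℝ) = y i₁ := hi₁.symm
    _ ≤ _ := Finset.single_le_sum (fun i _ => hnonneg y hy i) (Finset.mem_univ i₁)
  have hNpos : (0:ℝ) < N := lt_of_lt_of_le one_pos hN1
  -- the ℓ¹ norm of any nonzero cube vertex is ≥ 1
  have hsum1 : ∀ z ∈ X, z ≠ 0 → (1:ℝ) ≤ ∑ i, z i := by
    intro z hzX hz0
    obtain ⟨j, hj⟩ : ∃ j, z j = 1 := by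
      by_contra h
      push_neg at h
      apply hz0
      funext i
      rcases hX hzX i with h0' | h1'
      · exact h0'
      · exact absurd h1' (h i)
    calc (1:ℝ) = z j := hj.symm
    _ ≤ _ := Finset.single_le_sum (fun i _ => hnonneg z hzX i) (Finset.mem_univ j)
  constructor
  · -- extreme → y ∉ cone
    intro hext hcone
    obtain ⟨s, lam, hsZ, hlam, hyeq⟩ := hcone
    set s' : Finset (Fin d → ℝ) := s.filter (fun z => lam z ≠ 0) with hs'
    have hs'Z : ∀ z ∈ s', z ∈ Z := fun z hz => hsZ (Finset.mem_of_mem_filter z hz)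
    have hyeq' : y = ∑ z ∈ s', lam z • z := by
      rw [hyeq]
      exact (Finset.sum_filter_of_ne (by
        intro z hz h hlz
        exact h (by rw [hlz, zero_smul]))).symm
    have hpos : ∀ z ∈ s', 0 < lam z := by
      intro z hz
      have := Finset.mem_filter.mp hz
      exact lt_of_le_of_ne (hlam z this.1) (Ne.symm this.2)
    have hs'ne : s'.Nonempty := by
      rcases Finset.eq_empty_or_nonempty s' with he | hne
      · exfalso; apply hy0; rw [hyeq', he, Finset.sum_empty]
      · exact hne
    obtain ⟨S, hS⟩ : ∃ S : ℝ, S = ∑ z ∈ s', lam z := ⟨_, rfl⟩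
    have hSpos : 0 < S := hS ▸ Finset.sum_pos hpos hs'ne
    -- each z in s' has 1 ≤ |z| ≤ N - 1
    have hzZ : ∀ z ∈ s', z ∈ X ∧ (∀ i, z i ≤ y i) ∧ z ≠ 0 ∧ z ≠ y := fun z hz => hs'Z z hz
    have hzup : ∀ z ∈ s', (∑ i, z i) ≤ N - 1 := by
      intro z hz
      obtain ⟨hzX, hzle, hz0, hzy⟩ := hzZ z hz
      obtain ⟨i₀, hi₀⟩ : ∃ i, z i ≠ y i := by
        by_contra h; push_neg at h; exact hzy (funext h)
      have hzi0 : z i₀ = 0 ∧ y i₀ = 1 := by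
        rcases hX hzX i₀ with h | h <;> rcases hycube i₀ with h' | h' <;>
          first
          | exact absurd (h.trans h'.symm) hi₀
          | (constructor <;> assumption)
          | (exfalso; have := hzle i₀; rw [h, h'] at this; linarith)
      have e1 : ∑ i, z i = z i₀ + ∑ i ∈ Finset.univ.erase i₀, z i :=
        (Finset.add_sum_erase _ _ (Finset.mem_univ i₀)).symm
      have e2 : N = y i₀ + ∑ i ∈ Finset.univ.erase i₀, y i := by
        rw [hNdef]; exact (Finset.add_sum_erase _ _ (Finset.mem_univ i₀)).symm
      have e3 : ∑ i ∈ Finset.univ.erase i₀, z i ≤ ∑ i ∈ Finset.univ.erase i₀, y i :=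
        Finset.sum_le_sum (fun i _ => hzle i)
      rw [e1, hzi0.1]
      rw [e2, hzi0.2]
      linarith
    -- N = Σ_z lam z * |z|
    have hNeq : N = ∑ z ∈ s', lam z * ∑ i, z i := by
      rw [hNdef]
      have : ∀ i, y i = ∑ z ∈ s', lam z * z i := by
        intro i
        conv_lhs => rw [hyeq']
        rw [Finset.sum_apply]
        simp [Pi.smul_apply, smul_eq_mul]
      calc ∑ i, y i = ∑ i, ∑ z ∈ s', lam z * z i := by
            exact Finset.sum_congr rfl fun i _ => this i
      _ = ∑ z ∈ s', ∑ i, lam z * z i := Finset.sum_comm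
      _ = ∑ z ∈ s', lam z * ∑ i, z i := by
            exact Finset.sum_congr rfl fun z _ => (Finset.mul_sum _ _ _).symm
    have hNle : N ≤ S * (N - 1) := by
      calc N = ∑ z ∈ s', lam z * ∑ i, z i := hNeq
      _ ≤ ∑ z ∈ s', lam z * (N - 1) :=
          Finset.sum_le_sum fun z hz => mul_le_mul_of_nonneg_left (hzup z hz) (hpos z hz).le
      _ = S * (N - 1) := by rw [hS, Finset.sum_mul]
    have hS1 : 1 < S := by
      by_contra h
      push_neg at h
      have : S * (N - 1) ≤ 1 * (N - 1) := by
        apply mul_le_mul_of_nonneg_right h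
        nlinarith
      nlinarith
    -- p := S⁻¹ • y is in the segment and a positive convex combination of s'
    have hpseg : S⁻¹ • y ∈ segment ℝ 0 y := by
      refine ⟨1 - S⁻¹, S⁻¹, ?_, inv_nonneg.mpr hSpos.le, by ring, by rw [smul_zero, zero_add]⟩
      have : S⁻¹ ≤ 1 := by
        rw [inv_le_one_iff₀]; right; exact hS1.le
      linarith
    have hcomb : ∑ z ∈ s', (S⁻¹ * lam z) • z = S⁻¹ • y := by
      rw [hyeq', Finset.smul_sum]
      exact Finset.sum_congr rfl fun z _ => (smul_smul _ _ _).symm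
    have habs := extreme_absorb hext (convex_convexHull ℝ X) s'
      (fun z hz => subset_convexHull ℝ X (hzZ z hz).1)
      (fun z => S⁻¹ * lam z)
      (fun z hz => mul_pos (inv_pos.mpr hSpos) (hpos z hz))
      (by rw [← Finset.mul_sum, ← hS, inv_mul_cancel₀ hSpos.ne'])
      (by rw [hcomb]; exact hpseg)
    obtain ⟨z₀, hz₀⟩ := hs'ne
    have hz₀seg := habs z₀ hz₀
    obtain ⟨hz₀X, hz₀le, hz₀0, hz₀y⟩ := hzZ z₀ hz₀
    obtain ⟨a, b, _, _, hab, habe⟩ := hz₀seg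
    have hz₀eq : z₀ = b • y := by rw [← habe, smul_zero, zero_add]
    have hbi : z₀ i₁ = b := by rw [hz₀eq, Pi.smul_apply, hi₁, smul_eq_mul, mul_one]
    rcases hX hz₀X i₁ with h | h
    · apply hz₀0
      rw [hz₀eq, ← hbi, h, zero_smul]
    · apply hz₀y
      rw [hz₀eq, ← hbi, h, one_smul]
  · -- y ∉ cone → extreme
    intro hnc
    have hcubefin : (cubeVerts d).Finite := by
      have : cubeVerts d ⊆ Set.pi Set.univ (fun _ : Fin d => ({0, 1} : Set ℝ)) := by
        intro x hx
        rw [Set.mem_pi]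
        intro i _
        rcases hx i with h | h <;> simp [h]
      exact (Set.Finite.pi (fun _ => (Set.finite_singleton (1:ℝ)).insert 0)).subset this
    have hXfin : X.Finite := hcubefin.subset hX
    have hZfin : Z.Finite := hXfin.subset (Set.sep_subset _ _)
    set Xs : Finset (Fin d → ℝ) := hXfin.toFinset with hXs
    set Zs : Finset (Fin d → ℝ) := hZfin.toFinset with hZs
    set W : Finset (Fin d → ℝ) := insert 0 (Zs.image (fun z => N • z)) with hW
    have h0img : (0 : Fin d → ℝ) ∉ Zs.image (fun z => N • z) := by
      intro h
      obtain ⟨z, hz, hz0⟩ := Finset.mem_image.mp h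
      have hzZ : z ∈ Z := hZfin.mem_toFinset.mp hz
      rcases smul_eq_zero.mp hz0 with h | h
      · exact hNpos.ne' h
      · exact hzZ.2.2.1 h
    -- y is not in the convex hull of W
    have hyW : y ∉ convexHull ℝ (↑W : Set (Fin d → ℝ)) := by
      intro hyK
      apply hnc
      rw [Finset.mem_convexHull'] at hyK
      obtain ⟨w, hw0, hw1, hsum⟩ := hyK
      rw [hW, Finset.sum_insert h0img, smul_zero, zero_add] at hsum
      have hinj : ∀ x ∈ Zs, ∀ x' ∈ Zs, N • x = N • x' → x = x' := by
        intro x _ x' _ h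
        exact smul_right_injective _ hNpos.ne' h
      rw [Finset.sum_image hinj] at hsum
      refine ⟨Zs, fun z => N * w (N • z), ?_, ?_, ?_⟩
      · intro z hz; exact hZfin.mem_toFinset.mp hz
      · intro z hz
        refine mul_nonneg hNpos.le (hw0 _ ?_)
        exact Finset.mem_insert_of_mem (Finset.mem_image_of_mem _ hz)
      · rw [← hsum]
        exact Finset.sum_congr rfl fun z _ => by rw [smul_smul, mul_comm]
    -- separate
    obtain ⟨f, u, hfK, hfy⟩ := geometric_hahn_banach_closed_point
      (convex_convexHull ℝ (↑W : Set (Fin d → ℝ))) (W.finite_toSet.isClosed_convexHull (𝕜 := ℝ)) hyW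
    have hu0 : 0 < u := by
      have h0W : (0 : Fin d → ℝ) ∈ convexHull ℝ (↑W : Set (Fin d → ℝ)) :=
        subset_convexHull ℝ _ (by rw [hW]; exact Finset.mem_insert_self _ _)
      have := hfK 0 h0W
      rwa [map_zero] at this
    have hfz : ∀ z ∈ Z, f z < u / N := by
      intro z hz
      have hNz : N • z ∈ convexHull ℝ (↑W : Set (Fin d → ℝ)) := by
        apply subset_convexHull ℝ _
        rw [hW]
        exact Finset.mem_insert_of_mem (Finset.mem_image_of_mem _ (hZfin.mem_toFinset.mpr hz))
      have := hfK _ hNz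
      rw [map_smul, smul_eq_mul] at this
      rw [lt_div_iff₀ hNpos]
      linarith
    obtain ⟨β, hβ⟩ : ∃ b : ℝ, b = f y := ⟨_, rfl⟩
    have hβu : u < β := by rw [hβ]; exact hfy
    obtain ⟨M, hM⟩ : ∃ M : ℝ, M = 1 + ∑ x ∈ Xs, |f x| := ⟨_, rfl⟩
    have hβpos : 0 < β := lt_trans hu0 hβu
    have hM1 : (1:ℝ) ≤ M := by
      rw [hM]
      have : (0:ℝ) ≤ ∑ x ∈ Xs, |f x| := Finset.sum_nonneg fun x _ => abs_nonneg _
      linarith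
    -- the separating linear functional
    obtain ⟨F, hFval⟩ : ∃ F : (Fin d → ℝ) →ₗ[ℝ] ℝ,
        ∀ x, F x = f x - (β / N) * ∑ i, y i * x i - M * ∑ i, (1 - y i) * x i := by
      refine ⟨f.toLinearMap - (β / N) • (∑ i : Fin d, y i • LinearMap.proj i)
        - M • (∑ i : Fin d, (1 - y i) • LinearMap.proj i), fun x => ?_⟩
      simp [LinearMap.sum_apply, LinearMap.proj_apply, Finset.mul_sum, smul_eq_mul]
    have hFy : F y = 0 := by
      rw [hFval]
      have e1 : ∑ i, y i * y i = N := by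
        rw [hNdef]
        refine Finset.sum_congr rfl fun i _ => ?_
        rcases hycube i with h | h <;> rw [h] <;> ring
      have e2 : ∑ i, (1 - y i) * y i = 0 := by
        refine Finset.sum_eq_zero fun i _ => ?_
        rcases hycube i with h | h <;> rw [h] <;> ring
      rw [e1, e2, div_mul_cancel₀ _ hNpos.ne', hβ]
      ring
    have hF0 : F 0 = 0 := map_zero F
    -- F is negative on all other points of X
    have hFneg : ∀ z ∈ X, z ≠ 0 → z ≠ y → F z < 0 := by
      intro z hzX hz0 hzy
      by_cases hle : ∀ i, z i ≤ y i
      · -- z ∈ Z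
        have hzZ : z ∈ Z := ⟨hzX, hle, hz0, hzy⟩
        have e1 : ∑ i, y i * z i = ∑ i, z i := by
          refine Finset.sum_congr rfl fun i _ => ?_
          rcases hX hzX i with h | h
          · rw [h]; ring
          · have : y i = 1 := by
              rcases hycube i with h' | h'
              · exfalso; have := hle i; rw [h, h'] at this; linarith
              · exact h'
            rw [this, one_mul]
        have e2 : ∑ i, (1 - y i) * z i = 0 := by
          refine Finset.sum_eq_zero fun i _ => ?_
          rcases hycube i with h | h
          · have : z i = 0 := le_antisymm (h ▸ hle i) (hnonneg z hzX i)
            rw [this]; ring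
          · rw [h]; ring
        rw [hFval, e1, e2, mul_zero, sub_zero]
        have h1 : f z < u / N := hfz z hzZ
        have h2 : (1:ℝ) ≤ ∑ i, z i := hsum1 z hzX hz0
        have h3 : (β / N) * 1 ≤ (β / N) * ∑ i, z i :=
          mul_le_mul_of_nonneg_left h2 (div_nonneg hβpos.le hNpos.le)
        have h4 : u / N < β / N := by gcongr
        linarith
      · push_neg at hle
        obtain ⟨i₀, hi₀⟩ := hle
        have hzi₀ : z i₀ = 1 ∧ y i₀ = 0 := by
          rcases hX hzX i₀ with h | h <;> rcases hycube i₀ with h' | h' <;>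
            first
            | (constructor <;> assumption)
            | (exfalso; rw [h, h'] at hi₀; linarith)
        have e2 : (1:ℝ) ≤ ∑ i, (1 - y i) * z i := by
          have hterm : ∀ i, (0:ℝ) ≤ (1 - y i) * z i := by
            intro i
            apply mul_nonneg _ (hnonneg z hzX i)
            rcases hycube i with h | h <;> rw [h] <;> norm_num
          calc (1:ℝ) = (1 - y i₀) * z i₀ := by rw [hzi₀.1, hzi₀.2]; ring
          _ ≤ _ := Finset.single_le_sum (fun i _ => hterm i) (Finset.mem_univ i₀)
        have e1 : (0:ℝ) ≤ ∑ i, y i * z i := by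
          refine Finset.sum_nonneg fun i _ => mul_nonneg (hnonneg y hy i) (hnonneg z hzX i)
        have hfzbd : f z ≤ M - 1 := by
          rw [hM]
          have : |f z| ≤ ∑ x ∈ Xs, |f x| :=
            Finset.single_le_sum (fun x _ => abs_nonneg (f x)) (hXfin.mem_toFinset.mpr hzX)
          have := le_trans (le_abs_self (f z)) this
          linarith
        rw [hFval]
        have hb : (β / N) * ∑ i, y i * z i ≥ 0 :=
          mul_nonneg (div_nonneg hβpos.le hNpos.le) e1
        have hMe : M * 1 ≤ M * ∑ i, (1 - y i) * z i :=
          mul_le_mul_of_nonneg_left e2 (by linarith)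
        linarith
    have hFle : ∀ z ∈ X, F z ≤ 0 := by
      intro z hzX
      by_cases h1 : z = 0
      · rw [h1, hF0]
      by_cases h2 : z = y
      · rw [h2, hFy]
      exact (hFneg z hzX h1 h2).le
    have hFhull : ∀ x ∈ convexHull ℝ X, F x ≤ 0 := by
      intro x hx
      have hconv : Convex ℝ {w : Fin d → ℝ | F w ≤ 0} := convex_halfSpace_le (F.isLinear) 0
      exact convexHull_min hFle hconv hx
    -- points of conv X where F vanishes lie on the segment
    have hFseg : ∀ x ∈ convexHull ℝ X, F x = 0 → x ∈ segment ℝ 0 y := by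
      intro x hx hFx
      rw [← hXfin.coe_toFinset, Finset.mem_convexHull'] at hx
      obtain ⟨w, hw0, hw1, hsum⟩ := hx
      have hFsum : ∑ z ∈ Xs, w z * F z = 0 := by
        rw [← hFx, ← hsum, map_sum]
        exact Finset.sum_congr rfl fun z _ => by rw [map_smul, smul_eq_mul]
      have hterm : ∀ z ∈ Xs, w z * F z ≤ 0 := fun z hz =>
        mul_nonpos_of_nonneg_of_nonpos (hw0 z hz) (hFle z (hXfin.mem_toFinset.mp hz))
      have hzero : ∀ z ∈ Xs, w z * F z = 0 :=
        (Finset.sum_eq_zero_iff_of_nonpos hterm).mp hFsum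
      have hwz : ∀ z ∈ Xs, z ≠ 0 → z ≠ y → w z = 0 := by
        intro z hz h1 h2
        have hFz : F z < 0 := hFneg z (hXfin.mem_toFinset.mp hz) h1 h2
        have := hzero z hz
        rcases mul_eq_zero.mp this with h | h
        · exact h
        · exact absurd h hFz.ne
      have hxy : x = w y • y := by
        rw [← hsum]
        apply Finset.sum_eq_single
        · intro z hz hzy
          by_cases h1 : z = 0
          · rw [h1, smul_zero]
          · rw [hwz z hz h1 hzy, zero_smul]
        · intro h
          exact absurd (hXfin.mem_toFinset.mpr hy) h
      have hwy1 : w y ≤ 1 := by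
        rw [← hw1]
        exact Finset.single_le_sum hw0 (hXfin.mem_toFinset.mpr hy)
      exact ⟨1 - w y, w y, by linarith [hw0 y (hXfin.mem_toFinset.mpr hy)],
        hw0 y (hXfin.mem_toFinset.mpr hy), by ring, by rw [smul_zero, zero_add, hxy]⟩
    constructor
    · rw [← convexHull_pair]
      exact convexHull_mono (by intro z hz; rcases hz with rfl | hz; exact h0; simp at hz; rwa [hz])
    · intro x₁ hx₁ x₂ hx₂ p hp hpo
      obtain ⟨a, b, ha, hb, hab, hpe⟩ := hpo
      have hFp : F p = 0 := by
        obtain ⟨c, e, _, _, _, hce⟩ := hp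
        rw [← hce, smul_zero, zero_add, map_smul, hFy, smul_eq_mul, mul_zero]
      have hFpe : a * F x₁ + b * F x₂ = 0 := by
        rw [← hFp, ← hpe, map_add, map_smul, map_smul, smul_eq_mul, smul_eq_mul]
      have h1 := hFhull x₁ hx₁
      have h2 := hFhull x₂ hx₂
      have hF1 : F x₁ = 0 := by nlinarith
      have hF2 : F x₂ = 0 := by nlinarith
      exact hFseg x₁ hx₁ hF1
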